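/- For every t > 0 and every v ∈ ℝ: ∫_ℝ exp(−(1/2)·tanh(2t)·(x² + v²)) · exp(−i·S(t)·x·v) dx = √π · √(coth(t) + tanh(t)) · exp(−tanh(t)·v²), where S(t) := 2·sinh²(t)/cosh(2t) = 2 sinh²t/(cosh²t + sinh²t). -/

import Mathlib

open MeasureTheory

lemma hyp_key (t : ℝ) (ht : 0 < t) :
    Real.tanh (2 * t) / 2 +
      (2 * Real.sinh t ^ 2 / Real.cosh (2 * t)) ^ 2 / (2 * Real.tanh (2 * t))
      = Real.tanh t := by
  have hc : (0:ℝ) < Real.cosh t := Real.cosh_pos t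
  have hs : (0:ℝ) < Real.sinh t := Real.sinh_pos_iff.2 ht
  have hC : (0:ℝ) < Real.cosh t ^ 2 + Real.sinh t ^ 2 := by positivity
  rw [Real.tanh_eq_sinh_div_cosh, Real.tanh_eq_sinh_div_cosh, Real.sinh_two_mul,
    Real.cosh_two_mul]
  field_simp

lemma hyp_pref (t : ℝ) (ht : 0 < t) :
    Real.pi / (Real.tanh (2 * t) / 2) =
      Real.pi * (Real.cosh t / Real.sinh t + Real.tanh t) := by
  have hc : (0:ℝ) < Real.cosh t := Real.cosh_pos t
  have hs : (0:ℝ) < Real.sinh t := Real.sinh_pos_iff.2 ht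
  have hC : (0:ℝ) < Real.cosh t ^ 2 + Real.sinh t ^ 2 := by positivity
  rw [Real.tanh_eq_sinh_div_cosh, Real.tanh_eq_sinh_div_cosh, Real.sinh_two_mul,
    Real.cosh_two_mul]
  field_simp

theorem stmt_17 (t : ℝ) (ht : 0 < t) (v : ℝ) :
    ∫ x : ℝ, Complex.exp (-(1 / 2 : ℂ) * ((Real.tanh (2 * t) : ℝ) : ℂ) *
          (((x : ℂ)) ^ 2 + ((v : ℂ)) ^ 2)) *
        Complex.exp (-(Complex.I *
          ((2 * Real.sinh t ^ 2 / Real.cosh (2 * t) : ℝ) : ℂ) * (x : ℂ) * (v : ℂ)))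
      = ((Real.sqrt Real.pi : ℝ) : ℂ) *
          ((Real.sqrt (Real.cosh t / Real.sinh t + Real.tanh t) : ℝ) : ℂ) *
          Complex.exp (-((Real.tanh t : ℝ) : ℂ) * ((v : ℂ)) ^ 2) := by
  set a : ℝ := Real.tanh (2 * t) with ha
  set S : ℝ := 2 * Real.sinh t ^ 2 / Real.cosh (2 * t) with hS
  have hc : (0:ℝ) < Real.cosh t := Real.cosh_pos t
  have hs : (0:ℝ) < Real.sinh t := Real.sinh_pos_iff.2 ht
  have ha0 : (0:ℝ) < a := by
    rw [ha, Real.tanh_eq_sinh_div_cosh]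
    exact div_pos (Real.sinh_pos_iff.2 (by linarith)) (Real.cosh_pos _)
  have hb : ((-(a/2) : ℝ) : ℂ).re < 0 := by
    simp only [Complex.ofReal_re]; linarith
  have h1 : (∫ x : ℝ, Complex.exp (-(1 / 2 : ℂ) * (a : ℂ) *
          (((x : ℂ)) ^ 2 + ((v : ℂ)) ^ 2)) *
        Complex.exp (-(Complex.I * (S : ℂ) * (x : ℂ) * (v : ℂ))))
      = ∫ x : ℝ, Complex.exp (((-(a/2) : ℝ) : ℂ) * (x:ℂ) ^ 2 +
          (-(Complex.I * S * v)) * (x:ℂ) + ((-(a/2) : ℝ) : ℂ) * (v:ℂ)^2) := by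
    congr 1; funext x
    rw [← Complex.exp_add]
    push_cast
    ring_nf
  rw [h1, integral_cexp_quadratic hb]
  have hnegb : -(((-(a/2) : ℝ)) : ℂ) = ((a/2 : ℝ) : ℂ) := by push_cast; ring
  rw [hnegb]
  -- prefactor
  have hpos : (0:ℝ) ≤ Real.pi / (a / 2) := by positivity
  have hpref : ((Real.pi : ℂ) / ((a/2 : ℝ) : ℂ)) ^ (1/2 : ℂ)
      = ((Real.sqrt Real.pi : ℝ) : ℂ) *
        ((Real.sqrt (Real.cosh t / Real.sinh t + Real.tanh t) : ℝ) : ℂ) := by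
    have : ((Real.pi : ℂ) / ((a/2 : ℝ) : ℂ)) = ((Real.pi / (a/2) : ℝ) : ℂ) := by
      push_cast; ring
    rw [this, show (1/2 : ℂ) = ((1/2 : ℝ) : ℂ) by norm_num,
      ← Complex.ofReal_cpow hpos, ← Real.sqrt_eq_rpow]
    · rw [hyp_pref t ht, Real.sqrt_mul Real.pi_pos.le]
      push_cast; ring
  rw [hpref]
  congr 1
  -- exponent
  congr 1
  have hexp : ((-(a/2) : ℝ) : ℂ) * (v:ℂ)^2 -
      (-(Complex.I * S * v))^2 / (4 * ((-(a/2) : ℝ) : ℂ))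
      = -(((a/2 + S^2/(2*a)) : ℝ) : ℂ) * (v:ℂ)^2 := by
    have haC : ((a : ℝ) : ℂ) ≠ 0 := by
      exact_mod_cast ne_of_gt ha0
    field_simp
    ring_nf
    simp [Complex.I_sq]
    field_simp
    ring
  rw [hexp]
  congr 2
  have := hyp_key t ht
  push_cast
  rw [← ha, ← hS] at *
  rw [← Complex.ofReal_tanh, ← this]
  push_cast
  ring
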